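/- Assume the inner product α is cyclic and the Douglas condition α(X,[u,v]_m) = 0 holds for all u,v ∈ m. Then the Minkowski norm F = √(α(y,y))·φ(α(X,y)/√(α(y,y))) is cyclic with respect to the reductive decomposition if and only if Φ(r)·Ψ(u,v,y) = 0 for all u,v ∈ m and y ∈ m∖{0}, where r = α(X,y)/√(α(y,y)). -/

import Mathlib

noncomputable section

/-- The fundamental tensor `g_y(u,v) = (1/2)·∂²/∂s∂t|_{s=t=0} F(y+su+tv)²`. -/
def gTensor {V : Type*} [NormedAddCommGroup V] [NormedSpace ℝ V]
    (F : V → ℝ) (y u v : V) : ℝ :=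
  (1 / 2) * deriv (fun s : ℝ => deriv (fun t : ℝ => (F (y + s • u + t • v)) ^ 2) 0) 0

/-- The Cartan tensor `C_y(u,v,w) = (1/2)·d/dt|_{t=0} g_{y+tw}(u,v)`. -/
def cartanTensor {V : Type*} [NormedAddCommGroup V] [NormedSpace ℝ V]
    (F : V → ℝ) (y u v w : V) : ℝ :=
  (1 / 2) * deriv (fun t : ℝ => gTensor F (y + t • w) u v) 0

/-- `F` is a Minkowski norm: positive and smooth away from `0`, positively
homogeneous of degree one, with positive-definite symmetric bilinear fundamental tensor. -/
structure IsMinkowskiNorm {V : Type*} [NormedAddCommGroup V] [NormedSpace ℝ V]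
    (F : V → ℝ) : Prop where
  pos : ∀ y : V, y ≠ 0 → 0 < F y
  smooth : ContDiffOn ℝ (⊤ : ℕ∞) F {(0 : V)}ᶜ
  homog : ∀ c : ℝ, 0 < c → ∀ y : V, F (c • y) = c * F y
  g_symm : ∀ y : V, y ≠ 0 → ∀ u v : V, gTensor F y u v = gTensor F y v u
  g_add_left : ∀ y : V, y ≠ 0 → ∀ u u' v : V,
    gTensor F y (u + u') v = gTensor F y u v + gTensor F y u' v
  g_smul_left : ∀ y : V, y ≠ 0 → ∀ (c : ℝ) (u v : V),
    gTensor F y (c • u) v = c * gTensor F y u v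
  g_posdef : ∀ y : V, y ≠ 0 → ∀ u : V, u ≠ 0 → 0 < gTensor F y u u

/-- A Lie algebra structure on the real vector space `V`, given as a bilinear map. -/
structure IsLieBracket {V : Type*} [AddCommGroup V] [Module ℝ V]
    (L : V →ₗ[ℝ] V →ₗ[ℝ] V) : Prop where
  alternate : ∀ x : V, L x x = 0
  jacobi : ∀ x y z : V, L x (L y z) = L (L x y) z + L y (L x z)

/-- The cyclic condition for a Minkowski norm on a Lie algebra. -/
def IsCyclicNorm {V : Type*} [NormedAddCommGroup V] [NormedSpace ℝ V]
    (L : V →ₗ[ℝ] V →ₗ[ℝ] V) (F : V → ℝ) : Prop :=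
  ∀ y : V, y ≠ 0 → ∀ x z : V,
    gTensor F y (L x y) z + gTensor F y (L y z) x + gTensor F y (L z x) y = 0

/-- The Riemann curvature `R_y(u) = D_η N(y,u) − N(y,N(y,u)) + N(y,[y,u]) − [y,N(y,u)]`. -/
def RiemannCurv {V : Type*} [NormedAddCommGroup V] [NormedSpace ℝ V]
    (L : V →ₗ[ℝ] V →ₗ[ℝ] V) (η : V → V) (N : V → V → V) (y u : V) : V :=
  fderiv ℝ (fun z => N z u) y (η y) - N y (N y u) + N y (L y u) - L y (N y u)

/-- Projection onto `m` along `h` in the decomposition `g = h ⊕ m`. -/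
def projTo {V : Type*} [AddCommGroup V] [Module ℝ V] (h m : Submodule ℝ V)
    (hcompl : IsCompl h m) : V →ₗ[ℝ] m :=
  m.linearProjOfIsCompl h hcompl.symm

/-- The inner product making the basis `e` orthonormal. -/
def basisInner {V : Type*} [AddCommGroup V] [Module ℝ V] {ι : Type*} [Fintype ι]
    (e : Module.Basis ι ℝ V) (x y : V) : ℝ :=
  ∑ k, e.repr x k * e.repr y k



lemma hasDerivAt_quad (c0 c1 c2 x : ℝ) :
    HasDerivAt (fun t : ℝ => c0 + c1*t + c2*t^2) (c1 + 2*c2*x) x := by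
  have h1 : HasDerivAt (fun t : ℝ => c1 * t) (c1 * 1) x := (hasDerivAt_id x).const_mul c1
  have h2 : HasDerivAt (fun t : ℝ => c2 * t^2) (c2 * (2 * x^1)) x :=
    (hasDerivAt_pow 2 x).const_mul c2
  have := (h1.const_add c0).add h2
  refine this.congr_deriv ?_
  ring

lemma hasDerivAt_R (p0 p1 p2 q0 q1 x : ℝ) (hp : 0 < p0 + p1*x + p2*x^2) :
    HasDerivAt (fun t : ℝ => (q0 + q1*t) / Real.sqrt (p0 + p1*t + p2*t^2))
      ((q1 * Real.sqrt (p0 + p1*x + p2*x^2)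
        - (q0 + q1*x) * ((p1 + 2*p2*x) / (2 * Real.sqrt (p0 + p1*x + p2*x^2))))
        / Real.sqrt (p0 + p1*x + p2*x^2) ^ 2) x := by
  have hq : Real.sqrt (p0 + p1*x + p2*x^2) ≠ 0 := by positivity
  have hb : HasDerivAt (fun t : ℝ => q0 + q1*t) q1 x := by
    simpa using hasDerivAt_quad q0 q1 0 x
  have ha := hasDerivAt_quad p0 p1 p2 x
  have hs := ha.sqrt (ne_of_gt hp)
  exact hb.div hs hq

lemma hasDerivAt_G (φ : ℝ → ℝ) (hφ : Differentiable ℝ φ)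
    (p0 p1 p2 q0 q1 x : ℝ) (hp : 0 < p0 + p1*x + p2*x^2) :
    HasDerivAt (fun t : ℝ =>
        (p0 + p1*t + p2*t^2) * φ ((q0 + q1*t) / Real.sqrt (p0 + p1*t + p2*t^2)) ^ 2)
      ((p1 + 2*p2*x) *
          (φ ((q0 + q1*x) / Real.sqrt (p0 + p1*x + p2*x^2)) ^ 2
            - ((q0 + q1*x) / Real.sqrt (p0 + p1*x + p2*x^2))
              * φ ((q0 + q1*x) / Real.sqrt (p0 + p1*x + p2*x^2))
              * deriv φ ((q0 + q1*x) / Real.sqrt (p0 + p1*x + p2*x^2)))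
        + Real.sqrt (p0 + p1*x + p2*x^2) * q1 *
            (2 * φ ((q0 + q1*x) / Real.sqrt (p0 + p1*x + p2*x^2))
              * deriv φ ((q0 + q1*x) / Real.sqrt (p0 + p1*x + p2*x^2)))) x := by
  have hq0 : (0:ℝ) < Real.sqrt (p0 + p1*x + p2*x^2) := Real.sqrt_pos.mpr hp
  have hq : Real.sqrt (p0 + p1*x + p2*x^2) ≠ 0 := ne_of_gt hq0
  have hq2 : Real.sqrt (p0 + p1*x + p2*x^2) ^ 2 = p0 + p1*x + p2*x^2 := Real.sq_sqrt hp.le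
  have ha := hasDerivAt_quad p0 p1 p2 x
  have hR := hasDerivAt_R p0 p1 p2 q0 q1 x hp
  have hφR : HasDerivAt (fun t : ℝ => φ ((q0 + q1*t) / Real.sqrt (p0 + p1*t + p2*t^2)))
      (deriv φ ((q0 + q1*x) / Real.sqrt (p0 + p1*x + p2*x^2)) *
        ((q1 * Real.sqrt (p0 + p1*x + p2*x^2)
          - (q0 + q1*x) * ((p1 + 2*p2*x) / (2 * Real.sqrt (p0 + p1*x + p2*x^2))))
          / Real.sqrt (p0 + p1*x + p2*x^2) ^ 2)) x :=
    ((hφ _).hasDerivAt).comp x hR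
  have hmain := ha.mul (hφR.pow 2)
  refine hmain.congr_deriv ?_
  simp only [Pi.pow_apply]
  set S := Real.sqrt (p0 + p1*x + p2*x^2) with hS
  rw [← hq2]
  field_simp
  ring

lemma gcalc (φ : ℝ → ℝ) (hφ : ContDiff ℝ (⊤:ℕ∞) φ)
    (A0 Au Av Auu Auv Avv B0 Bu Bv : ℝ) (hA0 : 0 < A0) :
    (1/2) * deriv (fun s : ℝ => deriv (fun t : ℝ =>
      (A0 + 2*s*Au + 2*t*Av + s^2*Auu + 2*(s*t)*Auv + t^2*Avv) *
      φ ((B0 + s*Bu + t*Bv) /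
        Real.sqrt (A0 + 2*s*Au + 2*t*Av + s^2*Auu + 2*(s*t)*Auv + t^2*Avv)) ^ 2) 0) 0
    = Auv * (φ (B0/Real.sqrt A0) ^ 2
          - (B0/Real.sqrt A0) * φ (B0/Real.sqrt A0) * deriv φ (B0/Real.sqrt A0))
      + (φ (B0/Real.sqrt A0) * deriv φ (B0/Real.sqrt A0)
          - (B0/Real.sqrt A0) * deriv φ (B0/Real.sqrt A0) ^ 2
          - (B0/Real.sqrt A0) * φ (B0/Real.sqrt A0) * deriv (deriv φ) (B0/Real.sqrt A0))
          * (Av*Bu + Au*Bv) / Real.sqrt A0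
      + (deriv φ (B0/Real.sqrt A0) ^ 2
          + φ (B0/Real.sqrt A0) * deriv (deriv φ) (B0/Real.sqrt A0)) * (Bu*Bv)
      - (φ (B0/Real.sqrt A0) * deriv φ (B0/Real.sqrt A0)
          - (B0/Real.sqrt A0) * deriv φ (B0/Real.sqrt A0) ^ 2
          - (B0/Real.sqrt A0) * φ (B0/Real.sqrt A0) * deriv (deriv φ) (B0/Real.sqrt A0))
          * (B0/Real.sqrt A0) * (Au*Av) / A0 := by
  have hφd : Differentiable ℝ φ := hφ.differentiable (by simp)
  have hφ' : ContDiff ℝ (⊤:ℕ∞) (deriv φ) := (contDiff_infty_iff_deriv.mp hφ).2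
  have hφ'd : Differentiable ℝ (deriv φ) := hφ'.differentiable (by simp)
  have hcont : Continuous fun s : ℝ => A0 + 2*Au*s + Auu*s^2 := by continuity
  have hopen : ∀ᶠ s in nhds (0:ℝ), 0 < A0 + 2*Au*s + Auu*s^2 := by
    have h0 : (0:ℝ) ∈ (fun s : ℝ => A0 + 2*Au*s + Auu*s^2) ⁻¹' Set.Ioi 0 := by
      simp only [Set.mem_preimage, Set.mem_Ioi]; norm_num [hA0]
    exact Filter.eventually_of_mem ((hcont.isOpen_preimage _ isOpen_Ioi).mem_nhds h0)
      (fun s hs => by simpa using hs)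
  have hev : (fun s : ℝ => deriv (fun t : ℝ =>
      (A0 + 2*s*Au + 2*t*Av + s^2*Auu + 2*(s*t)*Auv + t^2*Avv) *
      φ ((B0 + s*Bu + t*Bv) /
        Real.sqrt (A0 + 2*s*Au + 2*t*Av + s^2*Auu + 2*(s*t)*Auv + t^2*Avv)) ^ 2) 0)
      =ᶠ[nhds (0:ℝ)] (fun s : ℝ =>
        (2*Av + 2*Auv*s) *
          (φ ((B0 + Bu*s) / Real.sqrt (A0 + 2*Au*s + Auu*s^2)) ^ 2
            - (B0 + Bu*s) / Real.sqrt (A0 + 2*Au*s + Auu*s^2)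
              * φ ((B0 + Bu*s) / Real.sqrt (A0 + 2*Au*s + Auu*s^2))
              * deriv φ ((B0 + Bu*s) / Real.sqrt (A0 + 2*Au*s + Auu*s^2)))
        + Real.sqrt (A0 + 2*Au*s + Auu*s^2) * Bv *
            (2 * φ ((B0 + Bu*s) / Real.sqrt (A0 + 2*Au*s + Auu*s^2))
              * deriv φ ((B0 + Bu*s) / Real.sqrt (A0 + 2*Au*s + Auu*s^2)))) := by
    filter_upwards [hopen] with s hs
    have hfe : (fun t : ℝ =>
        (A0 + 2*s*Au + 2*t*Av + s^2*Auu + 2*(s*t)*Auv + t^2*Avv) *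
        φ ((B0 + s*Bu + t*Bv) /
          Real.sqrt (A0 + 2*s*Au + 2*t*Av + s^2*Auu + 2*(s*t)*Auv + t^2*Avv)) ^ 2)
        = (fun t : ℝ =>
        ((A0 + 2*Au*s + Auu*s^2) + (2*Av + 2*Auv*s)*t + Avv*t^2) *
        φ (((B0 + Bu*s) + Bv*t) /
          Real.sqrt ((A0 + 2*Au*s + Auu*s^2) + (2*Av + 2*Auv*s)*t + Avv*t^2)) ^ 2) := by
      funext t
      rw [show A0 + 2*s*Au + 2*t*Av + s^2*Auu + 2*(s*t)*Auv + t^2*Avv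
          = (A0 + 2*Au*s + Auu*s^2) + (2*Av + 2*Auv*s)*t + Avv*t^2 from by ring,
        show B0 + s*Bu + t*Bv = (B0 + Bu*s) + Bv*t from by ring]
    rw [hfe, (hasDerivAt_G φ hφd _ _ _ _ _ 0 (by simpa using hs)).deriv]
    norm_num
  rw [hev.deriv_eq]
  have hp0 : (0:ℝ) < A0 + 2*Au*0 + Auu*0^2 := by simpa using hA0
  have hR := hasDerivAt_R A0 (2*Au) Auu B0 Bu 0 hp0
  have hφR := ((hφd _).hasDerivAt).comp 0 hR
  have hφ'R := ((hφ'd _).hasDerivAt).comp 0 hR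
  have hlin : HasDerivAt (fun s : ℝ => 2*Av + 2*Auv*s) (2*Auv) 0 := by
    simpa using hasDerivAt_quad (2*Av) (2*Auv) 0 0
  have hsq := (hasDerivAt_quad A0 (2*Au) Auu 0).sqrt (ne_of_gt hp0)
  have hDd := (hlin.mul ((hφR.pow 2).sub ((hR.mul hφR).mul hφ'R))).add
    ((hsq.mul_const Bv).mul ((hφR.const_mul 2).mul hφ'R))
  simp only [Function.comp_def, Pi.mul_def, Pi.add_def, Pi.sub_def, Pi.pow_def] at hDd
  rw [hDd.deriv]
  have hsA : (0:ℝ) < Real.sqrt A0 := Real.sqrt_pos.mpr hA0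
  have hq2 : Real.sqrt A0 ^ 2 = A0 := Real.sq_sqrt hA0.le
  norm_num
  set q := Real.sqrt A0 with hqdef
  rw [← hq2]
  field_simp
  ring


set_option maxHeartbeats 2000000 in
/-- For a homogeneous Douglas `(α,β)`-metric `F = α·φ(β/α)` with `α`
cyclic, `F` is cyclic if and only if `Φ(r)·Ψ(u,v,y) = 0` for all `u,v ∈ m`, `y ∈ m∖{0}`,
where `r = α(X,y)/√(α(y,y))`,
`Φ(r) = φ(r)φ'(r) − r·φ'(r)² − r·φ(r)·φ''(r)` and
`Ψ(u,v,y) = α(y,[y,u]_m)(α(y,y)α(X,v) − α(y,v)α(X,y))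
          + α(y,[v,y]_m)(α(y,y)α(X,u) − α(y,u)α(X,y))`. -/
theorem cyclic_alpha_beta_Phi_Psi_criterion
    {g : Type*} [NormedAddCommGroup g] [NormedSpace ℝ g] [FiniteDimensional ℝ g]
    (L : g →ₗ[ℝ] g →ₗ[ℝ] g) (hL : IsLieBracket L)
    (h m : Submodule ℝ g) (hcompl : IsCompl h m)
    (hsubalg : ∀ x ∈ h, ∀ y ∈ h, L x y ∈ h)
    (hreduct : ∀ x ∈ h, ∀ y ∈ m, L x y ∈ m)
    (α : (↥m) →ₗ[ℝ] (↥m) →ₗ[ℝ] ℝ)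
    (hαsymm : ∀ u v : m, α u v = α v u)
    (hαpos : ∀ u : m, u ≠ 0 → 0 < α u u)
    (X : m) (hX : X ≠ 0)
    (φ : ℝ → ℝ) (hφ : ContDiff ℝ (⊤ : ℕ∞) φ) (hφpos : ∀ r : ℝ, 0 < φ r)
    (F : m → ℝ)
    (hFdef : ∀ y : m, F y = Real.sqrt (α y y) * φ (α X y / Real.sqrt (α y y)))
    (hF : IsMinkowskiNorm F)
    -- `α` induces a cyclic Riemannian metric:
    (hαcyc : ∀ x y z : m,
      α (projTo h m hcompl (L (x : g) (y : g))) z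
        + α (projTo h m hcompl (L (y : g) (z : g))) x
        + α (projTo h m hcompl (L (z : g) (x : g))) y = 0)
    -- the Douglas condition:
    (hdouglas : ∀ u v : m, α X (projTo h m hcompl (L (u : g) (v : g))) = 0) :
    (∀ y : m, y ≠ 0 → ∀ x z : m,
        gTensor F y (projTo h m hcompl (L (x : g) (y : g))) z
          + gTensor F y (projTo h m hcompl (L (y : g) (z : g))) x
          + gTensor F y (projTo h m hcompl (L (z : g) (x : g))) y = 0)
      ↔ (∀ u v y : m, y ≠ 0 →
          (φ (α X y / Real.sqrt (α y y)) * deriv φ (α X y / Real.sqrt (α y y))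
              - (α X y / Real.sqrt (α y y)) * (deriv φ (α X y / Real.sqrt (α y y))) ^ 2
              - (α X y / Real.sqrt (α y y)) * φ (α X y / Real.sqrt (α y y))
                  * deriv (deriv φ) (α X y / Real.sqrt (α y y)))
            * (α y (projTo h m hcompl (L (y : g) (u : g)))
                  * (α y y * α X v - α y v * α X y)
                + α y (projTo h m hcompl (L (v : g) (y : g)))
                  * (α y y * α X u - α y u * α X y)) = 0) := by
  classical
  have hFsq : ∀ w : ↥m, (F w)^2 = α w w * φ (α X w / Real.sqrt (α w w)) ^ 2 := by
    intro w
    have hnn : 0 ≤ α w w := by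
      rcases eq_or_ne w 0 with hw | hw
      · simp [hw]
      · exact (hαpos w hw).le
    rw [hFdef, mul_pow, Real.sq_sqrt hnn]
  have key : ∀ (y : ↥m), y ≠ 0 → ∀ u v : ↥m, gTensor F y u v
      = α u v * (φ (α X y / Real.sqrt (α y y)) ^ 2
          - (α X y / Real.sqrt (α y y)) * φ (α X y / Real.sqrt (α y y))
            * deriv φ (α X y / Real.sqrt (α y y)))
      + (φ (α X y / Real.sqrt (α y y)) * deriv φ (α X y / Real.sqrt (α y y))
          - (α X y / Real.sqrt (α y y)) * deriv φ (α X y / Real.sqrt (α y y)) ^ 2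
          - (α X y / Real.sqrt (α y y)) * φ (α X y / Real.sqrt (α y y))
            * deriv (deriv φ) (α X y / Real.sqrt (α y y)))
          * (α y v * α X u + α y u * α X v) / Real.sqrt (α y y)
      + (deriv φ (α X y / Real.sqrt (α y y)) ^ 2
          + φ (α X y / Real.sqrt (α y y)) * deriv (deriv φ) (α X y / Real.sqrt (α y y)))
          * (α X u * α X v)
      - (φ (α X y / Real.sqrt (α y y)) * deriv φ (α X y / Real.sqrt (α y y))
          - (α X y / Real.sqrt (α y y)) * deriv φ (α X y / Real.sqrt (α y y)) ^ 2
          - (α X y / Real.sqrt (α y y)) * φ (α X y / Real.sqrt (α y y))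
            * deriv (deriv φ) (α X y / Real.sqrt (α y y)))
          * (α X y / Real.sqrt (α y y)) * (α y u * α y v) / (α y y) := by
    intro y hy u v
    have hA0 : 0 < α y y := hαpos y hy
    have hexpA : ∀ s t : ℝ, (α (y + s•u + t•v)) (y + s•u + t•v)
        = α y y + 2*s*(α y u) + 2*t*(α y v) + s^2*(α u u) + 2*(s*t)*(α u v) + t^2*(α v v) := by
      intro s t
      simp only [map_add, map_smul, LinearMap.add_apply, LinearMap.smul_apply, smul_eq_mul]
      linear_combination s * (hαsymm u y) + t * (hαsymm v y) + (s*t) * (hαsymm v u)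
    have hexpB : ∀ s t : ℝ, α X (y + s•u + t•v) = α X y + s*(α X u) + t*(α X v) := by
      intro s t
      simp only [map_add, map_smul, smul_eq_mul]
    have hfe2 : (fun s : ℝ => deriv (fun t : ℝ => (F (y + s•u + t•v))^2) 0)
        = (fun s : ℝ => deriv (fun t : ℝ =>
          (α y y + 2*s*(α y u) + 2*t*(α y v) + s^2*(α u u) + 2*(s*t)*(α u v) + t^2*(α v v)) *
          φ ((α X y + s*(α X u) + t*(α X v)) /
            Real.sqrt (α y y + 2*s*(α y u) + 2*t*(α y v) + s^2*(α u u)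
              + 2*(s*t)*(α u v) + t^2*(α v v))) ^ 2) 0) := by
      funext s
      congr 1
      funext t
      rw [hFsq, hexpA s t, hexpB s t]
    unfold gTensor
    rw [hfe2]
    exact gcalc φ hφ (α y y) (α y u) (α y v) (α u u) (α u v) (α v v)
      (α X y) (α X u) (α X v) hA0
  have hsum : ∀ (y : ↥m), y ≠ 0 → ∀ x z : ↥m,
      gTensor F y (projTo h m hcompl (L (x : g) (y : g))) z
        + gTensor F y (projTo h m hcompl (L (y : g) (z : g))) x
        + gTensor F y (projTo h m hcompl (L (z : g) (x : g))) y
      = ((φ (α X y / Real.sqrt (α y y)) * deriv φ (α X y / Real.sqrt (α y y))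
              - (α X y / Real.sqrt (α y y)) * (deriv φ (α X y / Real.sqrt (α y y))) ^ 2
              - (α X y / Real.sqrt (α y y)) * φ (α X y / Real.sqrt (α y y))
                  * deriv (deriv φ) (α X y / Real.sqrt (α y y)))
            * (α y (projTo h m hcompl (L (y : g) (z : g)))
                  * (α y y * α X x - α y x * α X y)
                + α y (projTo h m hcompl (L (x : g) (y : g)))
                  * (α y y * α X z - α y z * α X y)))
          / (α y y * Real.sqrt (α y y)) := by
    intro y hy x z
    have hA0 : 0 < α y y := hαpos y hy
    have hq0 : (0:ℝ) < Real.sqrt (α y y) := Real.sqrt_pos.mpr hA0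
    rw [key y hy _ z, key y hy _ x, key y hy _ y]
    rw [hdouglas x y, hdouglas y z, hdouglas z x]
    rw [show (α (projTo h m hcompl (L (z : g) (x : g)))) y
        = -((α (projTo h m hcompl (L (x : g) (y : g)))) z
            + (α (projTo h m hcompl (L (y : g) (z : g)))) x) from by
      linarith [hαcyc x y z]]
    set q := Real.sqrt (α y y) with hqd
    have hq2 : q^2 = α y y := Real.sq_sqrt hA0.le
    have hqne : q ≠ 0 := ne_of_gt hq0
    rw [← hq2]
    field_simp
    ring
  constructor
  · intro H u v y hy
    have h0 := hsum y hy v u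
    rw [H y hy v u] at h0
    have hA0 : 0 < α y y := hαpos y hy
    have hq0 : (0:ℝ) < Real.sqrt (α y y) := Real.sqrt_pos.mpr hA0
    have hden : α y y * Real.sqrt (α y y) ≠ 0 := by positivity
    rcases div_eq_zero_iff.mp h0.symm with hE | hd
    · exact hE
    · exact absurd hd hden
  · intro H y hy x z
    rw [hsum y hy x z, H z x y hy, zero_div]


end
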